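/- arXiv:0707.1063 — 2 statements merged into one kernel-verified Lean document; each statement's English description precedes it below -/
import Mathlib

section
/- Let f : ℝ → ℝ be bounded (|f| ≤ A), let h ∈ L¹(ℝ) be bounded, let (t_l)_{l ∈ ℤ} be a sequence of reals and (ψ_l)_{l ∈ ℤ} functions ℝ → ℝ such that C := sup_t ∑_{l ∈ ℤ} |ψ_l(t - t_l)| < ∞, and suppose for all t, τ: h(t - τ) = lim_{L→∞} ∑_{l=-L}^{L} h(t_l - τ) ψ_l(t - t_l). If f satisfies the reproducing identity f(t) = ∫_ℝ f(τ) h(t - τ) dτ for all t, then f(t) = lim_{L→∞} ∑_{l=-L}^{L} f(t_l) ψ_l(t - t_l) for all t, with the series converging absolutely. -/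
open MeasureTheory Filter
open scoped Topology ENNReal

theorem lifting_sampling_to_zakai
    (f h : ℝ → ℝ) (A C : ℝ)
    (tl : ℤ → ℝ) (ψ : ℤ → ℝ → ℝ)
    (hfA : ∀ t, |f t| ≤ A)
    (hhint : Integrable h)
    (hhbdd : ∃ B, ∀ t, |h t| ≤ B)
    (hsumm : ∀ t, Summable (fun l : ℤ => |ψ l (t - tl l)|))
    (hC : ∀ t, (∑' l : ℤ, |ψ l (t - tl l)|) ≤ C)
    (hrep : ∀ t τ : ℝ,
      Tendsto (fun L : ℕ => ∑ l ∈ Finset.Icc (-(L : ℤ)) (L : ℤ),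
          h (tl l - τ) * ψ l (t - tl l)) atTop (nhds (h (t - τ))))
    (hrepro : ∀ t, f t = ∫ τ, f τ * h (t - τ)) :
    ∀ t, Summable (fun l : ℤ => |f (tl l) * ψ l (t - tl l)|) ∧
      Tendsto (fun L : ℕ => ∑ l ∈ Finset.Icc (-(L : ℤ)) (L : ℤ),
          f (tl l) * ψ l (t - tl l)) atTop (nhds (f t)) := by
  classical
  obtain ⟨B, hB⟩ := hhbdd
  have hA0 : 0 ≤ A := le_trans (abs_nonneg _) (hfA 0)
  -- Icc exhaustion of ℤ
  have hIcc : Tendsto (fun L : ℕ => Finset.Icc (-(L : ℤ)) (L : ℤ)) atTop atTop := by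
    apply tendsto_atTop_finset_of_monotone
    · intro a b hab
      apply Finset.Icc_subset_Icc
      · exact neg_le_neg (by exact_mod_cast hab)
      · exact_mod_cast hab
    · intro x
      exact ⟨x.natAbs, Finset.mem_Icc.mpr ⟨by omega, by omega⟩⟩
  -- integrability of translates of h
  have hTrInt : ∀ c : ℝ, Integrable (fun τ => h (c - τ)) := fun c =>
    hhint.comp_sub_left c
  -- Lp machinery for continuity of translation
  let H : Lp ℝ 1 (volume : Measure ℝ) := (memLp_one_iff_integrable.mpr hhint).toLp h
  let sub2 : C(ℝ × ℝ, ℝ) := ⟨fun p => p.1 - p.2, continuous_fst.sub continuous_snd⟩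
  let gmap : ℝ → C(ℝ, ℝ) := fun c => (ContinuousMap.curry sub2) c
  have hgm : ∀ c : ℝ, MeasurePreserving (gmap c) volume volume := fun c =>
    Measure.measurePreserving_sub_left volume c
  let Tr : ℝ → Lp ℝ 1 (volume : Measure ℝ) := fun c =>
    Lp.compMeasurePreserving (gmap c) (hgm c) H
  have hTrCont : Continuous Tr :=
    Continuous.compMeasurePreservingLp continuous_const
      (ContinuousMap.curry sub2).continuous hgm (by norm_num)
  have hTr_ae : ∀ c : ℝ, (⇑(Tr c) : ℝ → ℝ) =ᵐ[volume] fun τ => h (c - τ) := by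
    intro c
    refine (Lp.coeFn_compMeasurePreserving H (hgm c)).trans ?_
    have hH : (⇑H : ℝ → ℝ) =ᵐ[volume] h := MemLp.coeFn_toLp _
    exact (hgm c).quasiMeasurePreserving.ae_eq_comp hH
  -- the set where the reproducing integrand is integrable
  have hf0 : ∀ c : ℝ, ¬ Integrable (fun τ => f τ * h (c - τ)) volume → f c = 0 := by
    intro c hc
    rw [hrepro c, integral_undef hc]
  -- distance formula
  have hdist : ∀ c c' : ℝ,
      dist (Tr c') (Tr c) = ∫ τ, |h (c' - τ) - h (c - τ)| := by
    intro c c'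
    rw [L1.dist_eq_integral_dist]
    apply integral_congr_ae
    filter_upwards [hTr_ae c, hTr_ae c'] with τ h1 h2
    rw [Real.dist_eq, h1, h2]
  -- T is closed
  set T : Set ℝ := {c | Integrable (fun τ => f τ * h (c - τ)) volume} with hTdef
  have hTclosed : IsClosed T := by
    apply IsSeqClosed.isClosed
    intro cs c hcs hlim
    have h1 : Tendsto (fun k => dist (Tr (cs k)) (Tr c)) atTop (𝓝 0) :=
      tendsto_iff_dist_tendsto_zero.mp ((hTrCont.tendsto c).comp hlim)
    have hne : ∀ k, eLpNorm ((fun τ => h (cs k - τ)) - fun τ => h (c - τ)) 1 volume ≠ ∞ := by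
      intro k
      have : Integrable ((fun τ => h (cs k - τ)) - fun τ => h (c - τ)) volume :=
        (hTrInt (cs k)).sub (hTrInt c)
      exact (memLp_one_iff_integrable.mpr this).eLpNorm_ne_top
    have h2 : Tendsto (fun k =>
        eLpNorm ((fun τ => h (cs k - τ)) - fun τ => h (c - τ)) 1 volume) atTop (𝓝 0) := by
      have heq : ∀ k, eLpNorm ((fun τ => h (cs k - τ)) - fun τ => h (c - τ)) 1 volume
          = eLpNorm (⇑(Tr (cs k)) - ⇑(Tr c)) 1 volume := by
        intro k
        exact eLpNorm_congr_ae (((hTr_ae (cs k)).sub (hTr_ae c)).symm)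
      have hne' : ∀ k, eLpNorm (⇑(Tr (cs k)) - ⇑(Tr c)) 1 volume ≠ ∞ := by
        intro k; rw [← heq]; exact hne k
      simp_rw [heq]
      have h1' : Tendsto (fun k => (eLpNorm (⇑(Tr (cs k)) - ⇑(Tr c)) 1 volume).toReal)
          atTop (𝓝 ((0 : ℝ≥0∞)).toReal) := by
        simpa [Lp.dist_def] using h1
      exact (ENNReal.tendsto_toReal_iff hne' (by simp)).mp h1'
    have h3 : TendstoInMeasure volume (fun k τ => h (cs k - τ)) atTop (fun τ => h (c - τ)) :=
      tendstoInMeasure_of_tendsto_eLpNorm one_ne_zero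
        (fun k => (hTrInt (cs k)).aestronglyMeasurable)
        (hTrInt c).aestronglyMeasurable h2
    obtain ⟨ns, -, hns⟩ := h3.exists_seq_tendsto_ae
    have hAESM : AEStronglyMeasurable (fun τ => f τ * h (c - τ)) volume := by
      apply aestronglyMeasurable_of_tendsto_ae atTop
        (fun i => (hcs (ns i)).aestronglyMeasurable)
      filter_upwards [hns] with τ hτ
      exact hτ.const_mul (f τ)
    refine Integrable.mono' ((hTrInt c).abs.const_mul A) hAESM (ae_of_all _ fun τ => ?_)
    rw [Real.norm_eq_abs, abs_mul]
    exact mul_le_mul_of_nonneg_right (hfA τ) (abs_nonneg _)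
  -- continuity of f on T
  have hest : ∀ c ∈ T, ∀ c' ∈ T, |f c' - f c| ≤ A * dist (Tr c') (Tr c) := by
    intro c hc c' hc'
    have hsub : f c' - f c = ∫ τ, (f τ * h (c' - τ) - f τ * h (c - τ)) := by
      rw [integral_sub hc' hc, ← hrepro, ← hrepro]
    rw [hsub, hdist]
    calc |∫ τ, (f τ * h (c' - τ) - f τ * h (c - τ))|
        ≤ ∫ τ, |f τ * h (c' - τ) - f τ * h (c - τ)| := by
          simpa [Real.norm_eq_abs] using
            norm_integral_le_integral_norm (fun τ => f τ * h (c' - τ) - f τ * h (c - τ))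
      _ ≤ ∫ τ, A * |h (c' - τ) - h (c - τ)| := by
          apply integral_mono (hc'.sub hc).abs
            (((hTrInt c').sub (hTrInt c)).abs.const_mul A)
          intro τ
          show |f τ * h (c' - τ) - f τ * h (c - τ)| ≤ A * |h (c' - τ) - h (c - τ)|
          have heq2 : f τ * h (c' - τ) - f τ * h (c - τ)
              = f τ * (h (c' - τ) - h (c - τ)) := by ring
          rw [heq2, abs_mul]
          exact mul_le_mul_of_nonneg_right (hfA τ) (abs_nonneg _)
      _ = A * ∫ τ, |h (c' - τ) - h (c - τ)| := integral_const_mul _ _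
  have hcontOn : ContinuousOn f T := by
    intro c hc
    have hd : Tendsto (fun c' => A * dist (Tr c') (Tr c)) (𝓝 c) (𝓝 0) := by
      have := (hTrCont.tendsto c).dist (tendsto_const_nhds (x := Tr c))
      rw [dist_self] at this
      simpa using (tendsto_const_nhds (x := A)).mul this
    unfold ContinuousWithinAt
    rw [tendsto_iff_dist_tendsto_zero]
    refine squeeze_zero' (Eventually.of_forall fun _ => dist_nonneg) ?_
      (hd.mono_left nhdsWithin_le_nhds)
    refine eventually_nhdsWithin_of_forall fun c' hc' => ?_
    rw [Real.dist_eq]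
    exact hest c hc c' hc'
  -- f is a.e. strongly measurable
  have hfm : AEStronglyMeasurable f volume := by
    have hTm : MeasurableSet T := hTclosed.measurableSet
    have h1 : AEMeasurable f (volume.restrict T) := hcontOn.aemeasurable hTm
    have h2 : AEMeasurable f (volume.restrict Tᶜ) := by
      have hz : f =ᵐ[volume.restrict Tᶜ] 0 := by
        rw [Filter.EventuallyEq, ae_restrict_iff' hTm.compl]
        exact ae_of_all _ fun c hc => hf0 c hc
      exact (aemeasurable_congr hz).mpr aemeasurable_const
    have h3 : AEMeasurable f (volume.restrict T + volume.restrict Tᶜ) :=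
      aemeasurable_add_measure_iff.mpr ⟨h1, h2⟩
    rw [Measure.restrict_add_restrict_compl hTm] at h3
    exact h3.aestronglyMeasurable
  -- all reproducing integrands are integrable
  have hu : ∀ c : ℝ, Integrable (fun τ => f τ * h (c - τ)) volume := by
    intro c
    refine Integrable.mono' ((hTrInt c).abs.const_mul A)
      (hfm.mul (hTrInt c).aestronglyMeasurable) (ae_of_all _ fun τ => ?_)
    rw [Real.norm_eq_abs, abs_mul]
    exact mul_le_mul_of_nonneg_right (hfA τ) (abs_nonneg _)
  -- main argument
  intro t
  have hsum1 : Summable (fun l : ℤ => |f (tl l) * ψ l (t - tl l)|) := by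
    refine Summable.of_nonneg_of_le (fun l => abs_nonneg _) (fun l => ?_)
      ((hsumm t).mul_left A)
    rw [abs_mul]
    exact mul_le_mul_of_nonneg_right (hfA _) (abs_nonneg _)
  refine ⟨hsum1, ?_⟩
  set F : ℤ → ℝ → ℝ := fun l τ => f τ * h (tl l - τ) * ψ l (t - tl l) with hF
  have hFint : ∀ l, Integrable (F l) volume := fun l => (hu (tl l)).mul_const _
  have hnormval : ∀ l, (∫ τ, ‖F l τ‖) ≤ (A * ∫ τ, |h τ|) * |ψ l (t - tl l)| := by
    intro l
    have heq : (fun τ => ‖F l τ‖) = fun τ => |f τ * h (tl l - τ)| * |ψ l (t - tl l)| := by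
      funext τ; rw [Real.norm_eq_abs, hF, abs_mul]
    rw [heq, integral_mul_const]
    have hle : (∫ τ, |f τ * h (tl l - τ)|) ≤ A * ∫ τ, |h τ| := by
      have hstep : (∫ τ, |f τ * h (tl l - τ)|) ≤ ∫ τ, A * |h (tl l - τ)| := by
        apply integral_mono (hu (tl l)).abs (((hTrInt (tl l))).abs.const_mul A)
        intro τ
        show |f τ * h (tl l - τ)| ≤ A * |h (tl l - τ)|
        rw [abs_mul]
        exact mul_le_mul_of_nonneg_right (hfA τ) (abs_nonneg _)
      have hinv : (∫ τ, |h (tl l - τ)|) = ∫ τ, |h τ| :=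
        integral_sub_left_eq_self (fun x => |h x|) volume (tl l)
      rw [integral_const_mul, hinv] at hstep
      exact hstep
    exact mul_le_mul_of_nonneg_right hle (abs_nonneg _)
  have hFsumm : Summable (fun l => ∫ τ, ‖F l τ‖) := by
    refine Summable.of_nonneg_of_le
      (fun l => integral_nonneg fun τ => norm_nonneg _) hnormval ?_
    exact (hsumm t).mul_left _
  have KEY := hasSum_integral_of_summable_integral_norm hFint hFsumm
  have hval : ∀ l, (∫ τ, F l τ) = f (tl l) * ψ l (t - tl l) := by
    intro l
    rw [hF]
    simp only
    rw [integral_mul_const, ← hrepro (tl l)]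
  have hptw : ∀ τ, (∑' l, F l τ) = f τ * h (t - τ) := by
    intro τ
    have hs2 : Summable (fun l : ℤ => h (tl l - τ) * ψ l (t - tl l)) := by
      apply Summable.of_abs
      refine Summable.of_nonneg_of_le (fun l => abs_nonneg _) (fun l => ?_)
        ((hsumm t).mul_left B)
      rw [abs_mul]
      exact mul_le_mul_of_nonneg_right (hB _) (abs_nonneg _)
    have h4 : Tendsto (fun L : ℕ => ∑ l ∈ Finset.Icc (-(L : ℤ)) (L : ℤ),
        h (tl l - τ) * ψ l (t - tl l)) atTop
        (𝓝 (∑' l, h (tl l - τ) * ψ l (t - tl l))) :=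
      hs2.hasSum.comp hIcc
    have h5 : (∑' l, h (tl l - τ) * ψ l (t - tl l)) = h (t - τ) :=
      tendsto_nhds_unique h4 (hrep t τ)
    calc (∑' l, F l τ) = ∑' l, f τ * (h (tl l - τ) * ψ l (t - tl l)) := by
          apply tsum_congr; intro l; rw [hF]; ring
      _ = f τ * ∑' l, (h (tl l - τ) * ψ l (t - tl l)) := tsum_mul_left
      _ = f τ * h (t - τ) := by rw [h5]
  have KEY2 : HasSum (fun l => f (tl l) * ψ l (t - tl l)) (f t) := by
    have heq1 : (fun l => ∫ τ, F l τ) = fun l => f (tl l) * ψ l (t - tl l) := funext hval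
    have heq2 : (∫ τ, ∑' l, F l τ) = f t := by
      rw [show (fun τ => ∑' l, F l τ) = fun τ => f τ * h (t - τ) from funext hptw]
      exact (hrepro t).symm
    rw [heq1, heq2] at KEY
    exact KEY
  exact KEY2.comp hIcc
end

section
/- Let c > (1+π)/4, M = 2^{b-1} with b ≥ 2, λ > 1, and consider the interval [A₀, B₀] with B₀ - A₀ ≤ 1/(Mλ). Let f be differentiable with |f(t)| ≤ 1, |f'(t)| ≤ π, and let d_b be continuous with d_b(A₀) = 2c/M and d_b(B₀) = -2c/M. Then there exist an index j ∈ {-(M-1), ..., M-1} and a point z ∈ [A₀, B₀] such that f(z) + d_b(z) = j/M, i.e., the dithered field crosses one of the quantization levels {0, ±1/M, ..., ±(M-1)/M} in [A₀, B₀]. -/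
set_option maxHeartbeats 800000

theorem bbit_level_crossing
    (f d : ℝ → ℝ) (c lam A₀ B₀ : ℝ) (b : ℕ) (hb : 2 ≤ b)
    (M : ℕ) (hM : M = 2 ^ (b - 1))
    (hc : (1 + Real.pi) / 4 < c) (hlam : 1 < lam)
    (hAB : A₀ < B₀) (hlen : B₀ - A₀ ≤ 1 / (M * lam))
    (hfdiff : Differentiable ℝ f)
    (hfbdd : ∀ t, |f t| ≤ 1)
    (hfslope : ∀ t, |deriv f t| ≤ Real.pi)
    (hdcont : Continuous d)
    (hdA : d A₀ = 2 * c / M) (hdB : d B₀ = -(2 * c / M)) :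
    ∃ j : ℤ, -((M : ℤ) - 1) ≤ j ∧ j ≤ (M : ℤ) - 1 ∧
      ∃ z ∈ Set.Icc A₀ B₀, f z + d z = (j : ℝ) / M := by
  have hpi : (0:ℝ) < Real.pi := Real.pi_pos
  have hpi1 : (1:ℝ) < Real.pi := by linarith [Real.pi_gt_three]
  have hM1 : 1 ≤ M := by
    subst hM; exact Nat.one_le_two_pow
  have hMr : (1:ℝ) ≤ (M:ℝ) := by exact_mod_cast hM1
  have hMpos : (0:ℝ) < (M:ℝ) := by linarith
  -- Lipschitz bound on f
  have hlip : LipschitzWith (Real.toNNReal Real.pi) f := by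
    apply lipschitzWith_of_nnnorm_deriv_le hfdiff
    intro x
    rw [← NNReal.coe_le_coe]
    simp [Real.coe_toNNReal _ hpi.le]
    simpa [Real.norm_eq_abs] using hfslope x
  have hfab : |f A₀ - f B₀| ≤ Real.pi * (B₀ - A₀) := by
    have h := hlip.dist_le_mul A₀ B₀
    rw [Real.dist_eq, Real.dist_eq, Real.coe_toNNReal _ hpi.le] at h
    calc |f A₀ - f B₀| ≤ Real.pi * |A₀ - B₀| := h
      _ = Real.pi * (B₀ - A₀) := by rw [abs_sub_comm, abs_of_pos (by linarith)]
  have hlen' : Real.pi * (B₀ - A₀) ≤ Real.pi / M := by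
    have h1 : (0:ℝ) < (M:ℝ) * lam := by positivity
    have : (1:ℝ) / ((M:ℝ) * lam) ≤ 1 / (M:ℝ) := by
      apply div_le_div_of_nonneg_left one_pos.le hMpos
      nlinarith
    have h2 : B₀ - A₀ ≤ 1 / (M:ℝ) := le_trans hlen this
    calc Real.pi * (B₀ - A₀) ≤ Real.pi * (1 / M) := by nlinarith
      _ = Real.pi / M := by ring
  have hdrop : f A₀ - f B₀ ≥ -(Real.pi / M) := by
    have := abs_le.mp hfab
    linarith [this.1]
  set L : ℝ := f B₀ - 2 * c / M with hL
  set U : ℝ := f A₀ + 2 * c / M with hU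
  clear_value L U
  have hcpos : (1:ℝ) < 2 * c := by linarith
  have hsplit : (1 + Real.pi) / (M:ℝ) = 1 / M + Real.pi / M := by ring
  have h4c : (1 + Real.pi) / (M:ℝ) < 4 * c / M :=
    (div_lt_div_iff_of_pos_right hMpos).mpr (by linarith)
  have hUL : L + 1 / M < U := by
    have hEq : U - L = (f A₀ - f B₀) + 4 * c / M := by rw [hL, hU]; ring
    linarith
  have h2c : 1 / (M:ℝ) < 2 * c / M := (div_lt_div_iff_of_pos_right hMpos).mpr (by linarith)
  have hmm1 : ((M:ℝ) - 1) / M = 1 - 1 / M := by field_simp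
  have hLlt : L < ((M:ℝ) - 1) / M := by
    have hfB := (abs_le.mp (hfbdd B₀)).2
    rw [hL, hmm1]; linarith
  have hUgt : -(((M:ℝ) - 1) / M) < U := by
    have hfA := (abs_le.mp (hfbdd A₀)).1
    rw [hU, hmm1]; linarith
  have hml : (M:ℝ) * L < (M:ℝ) - 1 := by
    have h := mul_lt_mul_of_pos_left hLlt hMpos
    have hm2 : (M:ℝ) * (((M:ℝ) - 1) / M) = (M:ℝ) - 1 := by field_simp
    linarith
  refine ⟨max ⌈(M:ℝ) * L⌉ (-((M:ℤ) - 1)), le_max_right _ _, ?_, ?_⟩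
  · apply max_le
    · rw [Int.ceil_le]
      push_cast
      linarith
    · have : (1:ℤ) ≤ (M:ℤ) := by exact_mod_cast hM1
      omega
  · set j : ℤ := max ⌈(M:ℝ) * L⌉ (-((M:ℤ) - 1)) with hj
    clear_value j
    have hjL : L ≤ (j:ℝ) / M := by
      have h1 : ((M:ℝ) * L) ≤ (⌈(M:ℝ) * L⌉ : ℝ) := Int.le_ceil _
      have h2 : ⌈(M:ℝ) * L⌉ ≤ j := hj ▸ le_max_left _ _
      have h2' : ((⌈(M:ℝ) * L⌉ : ℤ) : ℝ) ≤ (j:ℝ) := by exact_mod_cast h2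
      rw [le_div_iff₀ hMpos, mul_comm]
      linarith
    have hjU : (j:ℝ) / M ≤ U := by
      rw [div_le_iff₀ hMpos]
      have hc1 : (⌈(M:ℝ) * L⌉ : ℝ) < (M:ℝ) * L + 1 := Int.ceil_lt_add_one _
      have hexp : (M:ℝ) * (L + 1 / M) = (M:ℝ) * L + 1 := by field_simp
      have hc2 : (M:ℝ) * L + 1 ≤ U * (M:ℝ) := by
        have h := mul_lt_mul_of_pos_left hUL hMpos
        nlinarith
      have hc3 : ((-((M:ℤ) - 1) : ℤ) : ℝ) ≤ U * (M:ℝ) := by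
        push_cast
        have h := mul_lt_mul_of_pos_right hUgt hMpos
        have hm3 : -(((M:ℝ) - 1) / M) * M = -((M:ℝ) - 1) := by field_simp
        linarith
      have hjc : (j:ℝ) = max ((⌈(M:ℝ) * L⌉ : ℤ) : ℝ) ((-((M:ℤ) - 1) : ℤ) : ℝ) := by
        rw [hj]; exact_mod_cast rfl
      rw [hjc]
      exact max_le (by linarith) hc3
    have hg : Continuous (fun t => f t + d t) := hfdiff.continuous.add hdcont
    have hmem : (j:ℝ)/M ∈ Set.Icc (f B₀ + d B₀) (f A₀ + d A₀) := by
      rw [hdA, hdB]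
      constructor
      · simpa [hL, sub_eq_add_neg] using hjL
      · simpa [hU] using hjU
    obtain ⟨z, hz, hzeq⟩ := intermediate_value_Icc' hAB.le hg.continuousOn hmem
    exact ⟨z, hz, hzeq⟩
end
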